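/- Let K be a number field that is Galois over ℚ, and let ι ∈ Gal(K/ℚ) be an element with ι ∘ ι = id such that for every ring embedding ρ : K → ℂ and every x ∈ K one has complex conjugate of ρ(x) equal to ρ(ι(x)). Let p be a prime number, let 𝔭 be a nonzero prime ideal of the ring of integers 𝒪_K lying over p with absolute norm p^{f₀}, let h ≥ 1 be an integer such that 𝔭^h is the principal ideal generated by an element a ∈ 𝒪_K, let n ≥ 1 be an integer, and set α = a^{2n}. Let m ∈ ℤ and let f : Gal(K/ℚ) → ℤ be a function satisfying f(σ) + f(ι ∘ σ) = m for all σ ∈ Gal(K/ℚ). Then the element β = ∏_{σ ∈ Gal(K/ℚ)} σ(α)^{f(σ)} of K^× satisfies ρ(β) · conj(ρ(β)) = (p^{2 n h f₀})^m for every ring embedding ρ : K → ℂ; that is, β is a Weil p^{2nhf₀}-number of weight m. -/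

import Mathlib

open scoped NumberField

theorem weil_number_of_ideal
    (K : Type*) [Field K] [NumberField K] [IsGalois ℚ K]
    (ι : K ≃ₐ[ℚ] K) (hι : ∀ x : K, ι (ι x) = x)
    (hconj : ∀ (ρ : K →+* ℂ) (x : K), (starRingEnd ℂ) (ρ x) = ρ (ι x))
    (p : ℕ) (hp : p.Prime)
    (𝔭 : Ideal (𝓞 K)) (h𝔭 : 𝔭.IsPrime) (h𝔭0 : 𝔭 ≠ ⊥)
    (hover : 𝔭.comap (algebraMap ℤ (𝓞 K)) = Ideal.span {(p : ℤ)})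
    (f₀ : ℕ) (hnorm : Ideal.absNorm 𝔭 = p ^ f₀)
    (h : ℕ) (hh : 1 ≤ h)
    (a : 𝓞 K) (hprin : 𝔭 ^ h = Ideal.span {a})
    (n : ℕ) (hn : 1 ≤ n)
    (m : ℤ) (f : (K ≃ₐ[ℚ] K) → ℤ)
    (hf : ∀ σ : K ≃ₐ[ℚ] K, f σ + f (σ.trans ι) = m) :
    ∀ ρ : K →+* ℂ,
      ρ (∏ σ : K ≃ₐ[ℚ] K, σ (algebraMap (𝓞 K) K (a ^ (2 * n))) ^ f σ) *
          (starRingEnd ℂ) (ρ (∏ σ : K ≃ₐ[ℚ] K, σ (algebraMap (𝓞 K) K (a ^ (2 * n))) ^ f σ))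
        = ((p : ℂ) ^ (2 * n * h * f₀)) ^ m := by
  intro ρ
  set α : K := algebraMap (𝓞 K) K (a ^ (2 * n)) with hα
  set β : K := ∏ σ : K ≃ₐ[ℚ] K, σ α ^ f σ with hβ
  -- a ≠ 0
  have ha : a ≠ 0 := by
    rintro rfl
    apply h𝔭0
    rw [← Ideal.zero_eq_bot]
    have hb : 𝔭 ^ h = 0 := by
      rw [hprin, Ideal.zero_eq_bot, Ideal.span_singleton_eq_bot]
    exact (pow_eq_zero_iff (by omega : h ≠ 0)).mp hb
  have hα0 : α ≠ 0 := by
    rw [hα, map_pow]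
    refine pow_ne_zero _ (fun hc => ha ?_)
    exact (map_eq_zero_iff _ (FaithfulSMul.algebraMap_injective (𝓞 K) K)).mp hc
  -- norm computation
  have hNa : (Algebra.norm ℤ a).natAbs = p ^ (h * f₀) := by
    rw [← Ideal.absNorm_span_singleton, ← hprin, map_pow, hnorm, ← pow_mul, mul_comm]
  have hprod : ∏ σ : K ≃ₐ[ℚ] K, σ α = (p : K) ^ (2 * n * h * f₀) := by
    have h2 : ((Algebra.norm ℤ a) ^ 2 : ℤ) = ((p : ℤ) ^ (h * f₀)) ^ 2 := by
      rw [sq, ← Int.natAbs_mul_self, hNa]; push_cast; ring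
    have hQ : (Algebra.norm ℚ) (((a ^ (2 * n) : 𝓞 K) : K)) = (p : ℚ) ^ (2 * n * h * f₀) := by
      rw [← Algebra.coe_norm_int, map_pow, Int.cast_pow]
      calc ((Algebra.norm ℤ a : ℚ)) ^ (2 * n)
          = ((((Algebra.norm ℤ a) ^ 2 : ℤ)) : ℚ) ^ n := by
            rw [mul_comm 2 n, pow_mul]; push_cast; ring
        _ = (p : ℚ) ^ (2 * n * h * f₀) := by
            rw [h2]; push_cast; rw [← pow_mul, ← pow_mul]; congr 1; ring
    have hcoe : α = ((a ^ (2 * n) : 𝓞 K) : K) := rfl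
    rw [← Algebra.norm_eq_prod_automorphisms, hcoe, hQ]
    rw [map_pow, map_natCast]
  -- ι as involution in the group
  have hιmul : ∀ σ : K ≃ₐ[ℚ] K, ι * (ι * σ) = σ := by
    intro σ; ext x; simp [hι]
  have hιβ : ι β = ∏ σ : K ≃ₐ[ℚ] K, σ α ^ f (σ.trans ι) := by
    rw [hβ, map_prod]
    have : ∀ σ : K ≃ₐ[ℚ] K, ι (σ α ^ f σ) = ((ι * σ) α) ^ f σ := by
      intro σ; rw [map_zpow₀]; rfl
    simp_rw [this]
    refine Fintype.prod_equiv (Equiv.mulLeft ι) _ _ (fun σ => ?_)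
    have h1 : (ι * σ).trans ι = σ := by ext x; simp [hι]
    simp only [Equiv.coe_mulLeft, h1]
  have hββ : β * ι β = ((p : K) ^ (2 * n * h * f₀)) ^ m := by
    rw [hιβ, hβ, ← Finset.prod_mul_distrib]
    have : ∀ σ : K ≃ₐ[ℚ] K, σ α ^ f σ * σ α ^ f (σ.trans ι) = σ α ^ m := by
      intro σ
      rw [← zpow_add₀ (by simpa using hα0), hf σ]
    simp_rw [this]
    rw [Finset.prod_zpow, hprod]
  calc ρ β * (starRingEnd ℂ) (ρ β) = ρ (β * ι β) := by rw [hconj, map_mul]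
    _ = ((p : ℂ) ^ (2 * n * h * f₀)) ^ m := by
        rw [hββ, map_zpow₀, map_pow, map_natCast]
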